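/- Let u be a w-bubble and let i_1, …, i_N be pairwise distinct indices in {1, …, n} such that w_{i_j} divides w_{i_{j+1}} for every j ∈ {1, …, N−1}. Then Σ_{j=1}^N w_{i_j} u_{i_j} < d_w. -/

import Mathlib

/-- The weighted dot product `w · u = ∑ i, w i * u i`. -/
def dotW {n : ℕ} (w u : Fin n → ℕ) : ℕ := ∑ i, w i * u i

/-- `d_w`, the least common multiple of the weights. -/
def lcmW {n : ℕ} (w : Fin n → ℕ) : ℕ := Finset.univ.lcm w

/-- `u` is a `w`-bubble: `w · u ≥ 2 d_w` and there is no `v ⪯ u` with `w · v = d_w`. -/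
def IsBubble {n : ℕ} (w u : Fin n → ℕ) : Prop :=
  2 * lcmW w ≤ dotW w u ∧
    ¬ ∃ v : Fin n → ℕ, (∀ i, v i ≤ u i) ∧ dotW w v = lcmW w

/-- Greedy lemma: along a divisibility-monotone sequence of weights, any target `r`
divisible by all the weights and at most the total capacity can be hit exactly. -/
lemma greedy_key : ∀ (N : ℕ) (W C : Fin N → ℕ)
    (_ : ∀ j k : Fin N, j ≤ k → W j ∣ W k) (r : ℕ)
    (_ : ∀ j, W j ∣ r) (_ : r ≤ ∑ j, W j * C j),
    ∃ v : Fin N → ℕ, (∀ j, v j ≤ C j) ∧ ∑ j, W j * v j = r := by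
  intro N
  induction N with
  | zero =>
    intro W C _ r _ hle
    simp only [Finset.univ_eq_empty, Finset.sum_empty, Nat.le_zero] at hle
    exact ⟨fun j => 0, fun j => j.elim0, by simp [hle]⟩
  | succ N ih =>
    intro W C hmono r hdiv hle
    set L := Fin.last N with hL
    by_cases hW : W L = 0
    · have hr : r = 0 := by
        have := hdiv L; rw [hW] at this; exact zero_dvd_iff.mp this
      exact ⟨fun j => 0, fun j => Nat.zero_le _, by simp [hr]⟩
    · have hWpos : 0 < W L := Nat.pos_of_ne_zero hW
      set m := min (C L) (r / W L) with hm
      have hWm : W L * m ≤ r := by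
        calc W L * m ≤ W L * (r / W L) := Nat.mul_le_mul_left _ (min_le_right _ _)
        _ ≤ r := Nat.mul_div_le r (W L)
      set r' := r - W L * m with hr'
      have hdiv' : ∀ j : Fin N, W j.castSucc ∣ r' :=
        fun j => Nat.dvd_sub (hdiv _)
          (Dvd.dvd.mul_right (hmono j.castSucc L (Fin.le_last _)) m)
      have hsum : ∑ j, W j * C j = (∑ j : Fin N, W j.castSucc * C j.castSucc) + W L * C L :=
        Fin.sum_univ_castSucc _
      have hle' : r' ≤ ∑ j : Fin N, W j.castSucc * C j.castSucc := by
        rcases le_or_gt (r / W L) (C L) with h | h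
        · have hmr : m = r / W L := min_eq_right h
          have : W L * m = r := by rw [hmr]; exact Nat.mul_div_cancel' (hdiv L)
          omega
        · have hmr : m = C L := min_eq_left (le_of_lt h)
          rw [hr', hmr]
          omega
      obtain ⟨v', hv1, hv2⟩ := ih (W ∘ Fin.castSucc) (C ∘ Fin.castSucc)
        (fun j k h => hmono _ _ (by simpa using h)) r' hdiv' hle'
      refine ⟨Fin.snoc v' m, ?_, ?_⟩
      · intro j
        refine Fin.lastCases ?_ ?_ j
        · simp [Fin.snoc_last, hm, hL]
        · intro k; simp only [Fin.snoc_castSucc]; exact hv1 k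
      · rw [Fin.sum_univ_castSucc]
        simp only [Fin.snoc_last, Fin.snoc_castSucc]
        simp only [← hL]
        have h2 : ∑ j : Fin N, W j.castSucc * v' j = r' := hv2
        rw [h2, hr']
        omega

theorem bubble_chain_sum_lt_lcm {n : ℕ} (hn : 0 < n) (w : Fin n → ℕ) (hw : ∀ i, 0 < w i)
    (u : Fin n → ℕ) (hu : IsBubble w u)
    (N : ℕ) (hN : 0 < N) (e : Fin N → Fin n) (he : Function.Injective e)
    (hdvd : ∀ (j : ℕ) (h : j + 1 < N), w (e ⟨j, by omega⟩) ∣ w (e ⟨j + 1, h⟩)) :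
    ∑ j, w (e j) * u (e j) < lcmW w := by
  by_contra hcon
  push_neg at hcon
  -- divisibility is transitive along the chain
  have hstep : ∀ (t : ℕ) (j : Fin N) (h : j.val + t < N),
      w (e j) ∣ w (e ⟨j.val + t, h⟩) := by
    intro t
    induction t with
    | zero => intro j h; simp
    | succ t iht =>
      intro j h
      have h1 : j.val + t < N := by omega
      have h2 : (j.val + t) + 1 < N := by omega
      have := hdvd (j.val + t) h2
      exact dvd_trans (iht j h1) this
  have hmono : ∀ j k : Fin N, j ≤ k → w (e j) ∣ w (e k) := by
    intro j k hjk
    have h : j.val + (k.val - j.val) < N := by omega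
    have hk : k = ⟨j.val + (k.val - j.val), h⟩ := by
      apply Fin.ext; simp; omega
    rw [hk]
    exact hstep (k.val - j.val) j h
  have hdiv : ∀ j : Fin N, w (e j) ∣ lcmW w :=
    fun j => Finset.dvd_lcm (Finset.mem_univ _)
  obtain ⟨v', hv1, hv2⟩ := greedy_key N (fun j => w (e j)) (fun j => u (e j))
    hmono (lcmW w) hdiv hcon
  set v : Fin n → ℕ := fun i => if h : ∃ j, e j = i then v' h.choose else 0 with hv
  have hve : ∀ j : Fin N, v (e j) = v' j := by
    intro j
    have hex : ∃ k, e k = e j := ⟨j, rfl⟩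
    have : hex.choose = j := he hex.choose_spec
    simp only [hv, dif_pos hex, this]
  apply hu.2
  refine ⟨v, ?_, ?_⟩
  · intro i
    by_cases h : ∃ j, e j = i
    · have hs := h.choose_spec
      simp only [hv, dif_pos h]
      calc v' h.choose ≤ u (e h.choose) := hv1 _
        _ = u i := by rw [hs]
    · simp [hv, dif_neg h]
  · show dotW w v = lcmW w
    have himg : ∑ i ∈ Finset.image e Finset.univ, w i * v i = ∑ j, w (e j) * v (e j) :=
      Finset.sum_image (fun a _ b _ hab => he hab)
    have houter : ∀ i ∈ Finset.univ, i ∉ Finset.image e Finset.univ → w i * v i = 0 := by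
      intro i _ hi
      have : ¬ ∃ j, e j = i := by
        intro ⟨j, hj⟩; exact hi (Finset.mem_image.mpr ⟨j, Finset.mem_univ _, hj⟩)
      simp [hv, dif_neg this]
    have := Finset.sum_subset (Finset.subset_univ (Finset.image e Finset.univ)) houter
    calc dotW w v = ∑ i, w i * v i := rfl
    _ = ∑ i ∈ Finset.image e Finset.univ, w i * v i := this.symm
    _ = ∑ j, w (e j) * v (e j) := himg
    _ = ∑ j, w (e j) * v' j := by simp_rw [hve]
    _ = lcmW w := hv2
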